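/- Let g ≥ 2 and let Θ ∈ M(2, 2g; ℝ) be the matrix whose first row is (1, 1, 0, 0, …, 0) and whose second row is (0, 0, 1, 1, 0, …, 0). Then the image of the homomorphism ρ_Θ : ℤ^{2g} → 𝕋² is dense in 𝕋², yet for every k ∈ ℤ^{2g} the cyclic subgroup { m·ρ_Θ(k) : m ∈ ℤ } generated by ρ_Θ(k) is NOT dense in 𝕋². (A dense representation into 𝕋² for which no element — in particular, no simple closed curve — is sent to a generator of a dense cyclic subgroup.) -/

import Mathlib

open Matrix

/-- The `2 × 2g` matrix with first row `(1, 1, 0, …, 0)` and second row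
`(0, 0, 1, 1, 0, …, 0)`. -/
def exMat (g : ℕ) : Matrix (Fin 2) (Fin (2*g)) ℝ :=
  Matrix.of fun i j =>
    if i = 0 then (if j.val = 0 ∨ j.val = 1 then 1 else 0)
    else (if j.val = 2 ∨ j.val = 3 then 1 else 0)

/-- The homomorphism `ρ_Θ : ℤ^{2g} → 𝕋²`, `k ↦ Θk mod 2π`, for `Θ = exMat g`. -/
noncomputable def rhoEx (g : ℕ) (k : Fin (2*g) → ℤ) : Fin 2 → AddCircle (2 * Real.pi) :=
  fun i => ((∑ j, exMat g i j * (k j : ℝ) : ℝ) : AddCircle (2 * Real.pi))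

/-- The integer points are dense in the circle `ℝ/2πℤ`. -/
lemma denseIntAC : Dense (Set.range (fun n : ℤ => ((n : ℝ) : AddCircle (2 * Real.pi)))) := by
  set S : AddSubgroup ℝ := AddSubgroup.closure {1, 2 * Real.pi} with hSdef
  have h1 : (1 : ℝ) ∈ S := AddSubgroup.subset_closure (by simp)
  have h2 : (2 * Real.pi : ℝ) ∈ S := AddSubgroup.subset_closure (by simp)
  have hS : Dense (S : Set ℝ) := by
    rcases S.dense_or_cyclic with h | ⟨a, ha⟩
    · exact h
    · exfalso
      rw [ha, AddSubgroup.mem_closure_singleton] at h1 h2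
      obtain ⟨m, hm⟩ := h1
      obtain ⟨n, hn⟩ := h2
      have hma : (m : ℝ) * a = 1 := by rw [← hm]; simp [zsmul_eq_mul]
      have hna : (n : ℝ) * a = 2 * Real.pi := by rw [← hn]; simp [zsmul_eq_mul]
      have hm0 : (m : ℝ) ≠ 0 := by
        intro h; rw [h, zero_mul] at hma; exact one_ne_zero hma.symm
      have hpi : Real.pi = ((n : ℚ) / (2 * m) : ℚ) := by
        push_cast
        field_simp
        linear_combination (n : ℝ) * hma - (m : ℝ) * hna
      exact (Rat.not_irrational _) (hpi ▸ irrational_pi)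
  have hcont : Continuous ((↑) : ℝ → AddCircle (2 * Real.pi)) := continuous_quotient_mk'
  have hsurj : DenseRange ((↑) : ℝ → AddCircle (2 * Real.pi)) :=
    (Quotient.mk''_surjective).denseRange
  have himg : Dense (((↑) : ℝ → AddCircle (2 * Real.pi)) '' S) :=
    hsurj.dense_image hcont hS
  refine himg.mono ?_
  rintro _ ⟨x, hx, rfl⟩
  induction hx using AddSubgroup.closure_induction with
  | mem y hy =>
      rcases hy with rfl | rfl
      · exact ⟨1, by norm_num⟩
      · exact ⟨0, by simp [AddCircle.coe_period]⟩
  | zero => exact ⟨0, by simp⟩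
  | add x y _ _ hx hy =>
      obtain ⟨nx, hnx⟩ := hx
      obtain ⟨ny, hny⟩ := hy
      exact ⟨nx + ny, by push_cast [AddCircle.coe_add]; rw [← hnx, ← hny]⟩
  | neg x _ hx =>
      obtain ⟨nx, hnx⟩ := hx
      exact ⟨-nx, by
        have := congrArg (fun z : AddCircle (2 * Real.pi) => -z) hnx
        simpa [QuotientAddGroup.mk_neg] using this⟩

lemma rhoEx_apply0 {g : ℕ} (hg : 2 ≤ g) (k : Fin (2*g) → ℤ) :
    rhoEx g k 0 = (((k ⟨0, by omega⟩ + k ⟨1, by omega⟩ : ℤ) : ℝ) : AddCircle (2 * Real.pi)) := by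
  unfold rhoEx
  congr 1
  rw [Finset.sum_eq_add (⟨0, by omega⟩ : Fin (2*g)) (⟨1, by omega⟩ : Fin (2*g))
    (by simp [Fin.ext_iff])
    (fun c _ hc => by
      have h0 : c.val ≠ 0 := fun h => hc.1 (by simp [Fin.ext_iff, h])
      have h1 : c.val ≠ 1 := fun h => hc.2 (by simp [Fin.ext_iff, h])
      simp [exMat, h0, h1])
    (fun h => absurd (Finset.mem_univ _) h)
    (fun h => absurd (Finset.mem_univ _) h)]
  simp [exMat]

lemma rhoEx_apply1 {g : ℕ} (hg : 2 ≤ g) (k : Fin (2*g) → ℤ) :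
    rhoEx g k 1 = (((k ⟨2, by omega⟩ + k ⟨3, by omega⟩ : ℤ) : ℝ) : AddCircle (2 * Real.pi)) := by
  unfold rhoEx
  congr 1
  rw [Finset.sum_eq_add (⟨2, by omega⟩ : Fin (2*g)) (⟨3, by omega⟩ : Fin (2*g))
    (by simp [Fin.ext_iff])
    (fun c _ hc => by
      have h0 : c.val ≠ 2 := fun h => hc.1 (by simp [Fin.ext_iff, h])
      have h1 : c.val ≠ 3 := fun h => hc.2 (by simp [Fin.ext_iff, h])
      simp [exMat, h0, h1])
    (fun h => absurd (Finset.mem_univ _) h)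
    (fun h => absurd (Finset.mem_univ _) h)]
  simp [exMat]

lemma zsmul_coe (z : ℤ) (r : ℝ) :
    z • ((r : ℝ) : AddCircle (2 * Real.pi)) = ((z * r : ℝ) : AddCircle (2 * Real.pi)) := by
  rw [← AddCircle.coe_zsmul, zsmul_eq_mul]

/-- `π` is not zero in `ℝ/2πℤ`. -/
lemma coe_pi_ne_zero : ((Real.pi : ℝ) : AddCircle (2 * Real.pi)) ≠ 0 := by
  intro h
  rw [AddCircle.coe_eq_zero_iff] at h
  obtain ⟨n, hn⟩ := h
  rw [zsmul_eq_mul] at hn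
  have h2 : ((2 * n : ℤ) : ℝ) = 1 := by
    have := Real.pi_ne_zero
    have : ((2 * n : ℤ) : ℝ) * Real.pi = 1 * Real.pi := by push_cast; linarith [hn]
    exact mul_right_cancel₀ Real.pi_ne_zero this
  have : (2 * n : ℤ) = 1 := by exact_mod_cast h2
  omega

/-- If a continuous map to the circle vanishes on a set but not everywhere, the set
is not dense. -/
lemma not_dense_of_vanishing {X : Type*} [TopologicalSpace X] {s : Set X}
    (F : X → AddCircle (2 * Real.pi)) (hF : Continuous F) (hs : ∀ x ∈ s, F x = 0)
    (x : X) (hx : F x ≠ 0) : ¬ Dense s := by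
  haveI : Fact (0 < 2 * Real.pi) := ⟨by positivity⟩
  intro hd
  have hclosed : IsClosed {y : X | F y = 0} := isClosed_eq hF continuous_const
  have hsub : closure s ⊆ {y : X | F y = 0} := hclosed.closure_subset_iff.2 hs
  exact hx (hsub (hd x))

/-- A dense representation into `𝕋²` such that no element generates a dense cyclic
subgroup: `ρ_Θ` has dense image, yet for every `k ∈ ℤ^{2g}` the cyclic subgroup
generated by `ρ_Θ(k)` is not dense in `𝕋²`. -/
theorem dense_rep_without_dense_cyclic_generator {g : ℕ} (hg : 2 ≤ g) :
    DenseRange (rhoEx g) ∧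
      ∀ k : Fin (2*g) → ℤ, ¬ Dense (Set.range fun m : ℤ => m • rhoEx g k) := by
  constructor
  · -- density of the image
    have hpi : Dense (Set.pi Set.univ
        (fun _ : Fin 2 => Set.range (fun n : ℤ => ((n : ℝ) : AddCircle (2 * Real.pi))))) :=
      dense_pi Set.univ (fun _ _ => denseIntAC)
    refine hpi.mono ?_
    intro f hf
    obtain ⟨n, hn⟩ := hf 0 (Set.mem_univ _)
    obtain ⟨m, hm⟩ := hf 1 (Set.mem_univ _)
    refine ⟨fun j => if j.val = 0 then n else if j.val = 2 then m else 0, ?_⟩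
    funext i
    fin_cases i
    · show rhoEx g _ 0 = f 0
      rw [rhoEx_apply0 hg]
      simpa using hn
    · show rhoEx g _ 1 = f 1
      rw [rhoEx_apply1 hg]
      simpa using hm
  · -- no dense cyclic subgroup
    intro k
    set a : ℤ := k ⟨0, by omega⟩ + k ⟨1, by omega⟩ with ha
    set b : ℤ := k ⟨2, by omega⟩ + k ⟨3, by omega⟩ with hb
    have hv0 : rhoEx g k 0 = (((a : ℤ) : ℝ) : AddCircle (2 * Real.pi)) := rhoEx_apply0 hg k
    have hv1 : rhoEx g k 1 = (((b : ℤ) : ℝ) : AddCircle (2 * Real.pi)) := rhoEx_apply1 hg k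
    by_cases hb0 : b = 0
    · by_cases ha0 : a = 0
      · -- both zero: the orbit is {0}
        refine not_dense_of_vanishing (fun x => x 0) (continuous_apply 0) ?_
          (fun _ => ((Real.pi : ℝ) : AddCircle (2 * Real.pi))) coe_pi_ne_zero
        rintro _ ⟨m, rfl⟩
        simp only [Pi.smul_apply, hv0, ha0]
        simp
      · -- a ≠ 0 : use F x = a • x 1 (second coordinate vanishes since b = 0)
        refine not_dense_of_vanishing (fun x => x 1) (continuous_apply 1) ?_
          (fun _ => ((Real.pi : ℝ) : AddCircle (2 * Real.pi))) coe_pi_ne_zero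
        rintro _ ⟨m, rfl⟩
        simp only [Pi.smul_apply, hv1, hb0]
        simp
    · -- b ≠ 0 : use F x = b • x 0 - a • x 1
      refine not_dense_of_vanishing
        (fun x => b • x 0 - a • x 1)
        (((continuous_zsmul b).comp (continuous_apply 0)).sub
          ((continuous_zsmul a).comp (continuous_apply 1)))
        ?_
        ![((Real.pi / b : ℝ) : AddCircle (2 * Real.pi)), 0]
        ?_
      · rintro _ ⟨m, rfl⟩
        simp only [Pi.smul_apply, hv0, hv1, zsmul_coe]
        rw [← AddCircle.coe_sub,
          show (b : ℝ) * ((m : ℝ) * (a : ℝ)) - (a : ℝ) * ((m : ℝ) * (b : ℝ)) = 0 by ring]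
        simp
      · simp only [Matrix.cons_val_zero, Matrix.cons_val_one, Matrix.head_cons, smul_zero,
          sub_zero, zsmul_coe]
        rw [show (b : ℝ) * (Real.pi / b) = Real.pi by
          field_simp]
        exact coe_pi_ne_zero
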